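/- Let F be the free group on generators u, v and H = ⟨u⟩. If K ≤ F is a subgroup such that the left translation action of K on F/H has a finite orbit, then K is contained in a conjugate of H, and hence is cyclic. -/

import Mathlib

namespace Stmt18Aux

open FreeGroup

abbrev U : FreeGroup Bool := FreeGroup.of true

/-- The no-cancellation condition on adjacent letters of a reduced word. -/
def R (a b : Bool × Bool) : Prop := ¬(a.1 = b.1 ∧ a.2 = !b.2)

theorem reduce_cons_of_nil {a : Bool × Bool} {l : List (Bool × Bool)} (h : reduce l = []) :
    reduce (a :: l) = [a] := by
  rw [reduce.cons, h]

theorem reduce_cons_of_pos {a b : Bool × Bool} {l t : List (Bool × Bool)}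
    (h : reduce l = b :: t) (hc : a.1 = b.1 ∧ a.2 = !b.2) :
    reduce (a :: l) = t := by
  rw [reduce.cons, h]; exact if_pos hc

theorem reduce_cons_of_neg {a b : Bool × Bool} {l t : List (Bool × Bool)}
    (h : reduce l = b :: t) (hc : ¬(a.1 = b.1 ∧ a.2 = !b.2)) :
    reduce (a :: l) = a :: b :: t := by
  rw [reduce.cons, h]; exact if_neg hc

theorem reduce_eq_of_chain : ∀ {L : List (Bool × Bool)}, List.Chain' R L → reduce L = L := by
  intro L h
  induction L with
  | nil => rfl
  | cons a l ih =>
    rw [show List.Chain' R (a :: l) ↔ _ from List.isChain_cons] at h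
    have hl := ih h.2
    cases l with
    | nil => exact reduce_cons_of_nil rfl
    | cons b t =>
      have hb : ¬(a.1 = b.1 ∧ a.2 = !b.2) := h.1 b rfl
      exact reduce_cons_of_neg hl hb

theorem chain_of_reduce_eq : ∀ {L : List (Bool × Bool)}, reduce L = L → List.Chain' R L := by
  intro L
  induction L with
  | nil => exact fun _ => List.isChain_nil
  | cons a l ih =>
    intro h
    rcases hrl : reduce l with _ | ⟨b, t⟩
    · have h1 := reduce_cons_of_nil (a := a) hrl
      rw [h] at h1
      obtain rfl : l = [] := by
        have h2 := congrArg List.length h1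
        simp at h2
        exact h2
      exact List.isChain_singleton a
    · by_cases hc : a.1 = b.1 ∧ a.2 = !b.2
      · exfalso
        have h1 := reduce_cons_of_pos hrl hc
        rw [h] at h1
        have hlen : (reduce l).length ≤ l.length :=
          (FreeGroup.Red.sublist (FreeGroup.reduce.red)).length_le
        rw [hrl] at hlen
        have h2 := congrArg List.length h1
        simp at h2 hlen
        omega
      · have h1 := reduce_cons_of_neg hrl hc
        rw [h] at h1
        have h1b : l = b :: t := by injection h1
        subst h1b
        exact List.isChain_cons.mpr ⟨fun y hy => by
          obtain rfl : b = y := by simpa using hy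
          exact hc, ih hrl⟩

/-- `n`-fold concatenation of a word. -/
def repw (L : List (Bool × Bool)) : ℕ → List (Bool × Bool)
  | 0 => []
  | n + 1 => L ++ repw L n

theorem repw_length (L : List (Bool × Bool)) : ∀ n, (repw L n).length = n * L.length
  | 0 => by simp [repw]
  | n + 1 => by
    simp only [repw, List.length_append, repw_length L n]
    ring

theorem repw_head {L : List (Bool × Bool)} : ∀ {n : ℕ} {y : Bool × Bool},
    (repw L n).head? = some y → L.head? = some y := by
  intro n
  induction n with
  | zero => intro y hy; simp [repw] at hy
  | succ n ih =>
    intro y hy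
    simp only [repw] at hy
    cases L with
    | nil => exact ih (by simpa using hy)
    | cons a l => simpa using hy

theorem chain_repw {L : List (Bool × Bool)} (hc : List.Chain' R L)
    (hj : ∀ x ∈ L.getLast?, ∀ y ∈ L.head?, R x y) :
    ∀ n, List.Chain' R (repw L n)
  | 0 => List.isChain_nil
  | n + 1 =>
    List.IsChain.append hc (chain_repw hc hj n)
      (fun x hx y hy => hj x hx y (repw_head hy))

theorem mk_repw (L : List (Bool × Bool)) : ∀ n, FreeGroup.mk L ^ n = FreeGroup.mk (repw L n)
  | 0 => by rw [pow_zero, repw]; exact FreeGroup.one_eq_mk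
  | n + 1 => by
    rw [pow_succ', mk_repw L n, FreeGroup.mul_mk]; rfl

theorem norm_def (x : FreeGroup Bool) : norm x = x.toWord.length := rfl

theorem toWord_pow {x : FreeGroup Bool} (hj : ∀ a ∈ x.toWord.getLast?, ∀ b ∈ x.toWord.head?, R a b)
    (n : ℕ) : (x ^ n).toWord = repw x.toWord n := by
  have hc : List.Chain' R x.toWord := chain_of_reduce_eq (reduce_toWord x)
  have h1 : x ^ n = FreeGroup.mk (repw x.toWord n) := by
    conv_lhs => rw [← mk_toWord (x := x)]
    rw [mk_repw]
  rw [h1, toWord_mk, reduce_eq_of_chain (chain_repw hc hj n)]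

theorem toWord_U_zpow (m : ℤ) :
    ∃ b, (U ^ m).toWord = List.replicate m.natAbs (true, b) := by
  rcases le_or_gt 0 m with hm | hm
  · lift m to ℕ using hm
    exact ⟨true, by rw [zpow_natCast, toWord_of_pow]; simp⟩
  · refine ⟨false, ?_⟩
    obtain ⟨k, rfl⟩ : ∃ k : ℕ, m = -(k : ℤ) := ⟨m.natAbs, by omega⟩
    rw [zpow_neg, zpow_natCast, toWord_inv, toWord_of_pow]
    simp [FreeGroup.invRev]

theorem norm_U_zpow (m : ℤ) : norm (U ^ m) = m.natAbs := by
  obtain ⟨b, hb⟩ := toWord_U_zpow m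
  rw [norm_def, hb, List.length_replicate]

theorem chain_repl (n : ℕ) (b : Bool) : List.Chain' R (List.replicate n (true, b)) := by
  induction n with
  | zero => exact List.isChain_nil
  | succ n ih =>
    rw [List.replicate_succ, show List.Chain' R ((true, b) :: List.replicate n (true, b)) ↔ _ from List.isChain_cons]
    refine ⟨fun y hy => ?_, ih⟩
    obtain rfl : y = (true, b) :=
      (List.mem_replicate.mp (List.mem_of_mem_head? hy)).2
    simp [R]

theorem mk_single_true (a : Bool) : FreeGroup.mk [(a, true)] = FreeGroup.of a := rfl

theorem mk_single_false (a : Bool) : FreeGroup.mk [(a, false)] = (FreeGroup.of a)⁻¹ := by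
  rw [← mk_single_true, FreeGroup.inv_mk]
  simp [FreeGroup.invRev]

theorem conj_norm_le : ∀ N : ℕ, ∀ w : FreeGroup Bool, ∀ m : ℤ, norm w ≤ N → m ≠ 0 →
    norm (w * U ^ m * w⁻¹) ≤ m.natAbs → ∃ a : ℤ, w = U ^ a := by
  intro N
  induction N with
  | zero =>
    intro w m hw _ _
    have : w = 1 := norm_eq_zero.mp (Nat.le_zero.mp hw)
    exact ⟨0, by simp [this]⟩
  | succ N ih =>
    intro w m hw hm hnorm
    rcases List.eq_nil_or_concat w.toWord with hnil | ⟨W', r, hW⟩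
    · exact ⟨0, by simp [toWord_eq_nil_iff.mp hnil]⟩
    rw [List.concat_eq_append] at hW
    have hwmk : w = FreeGroup.mk W' * FreeGroup.mk [r] := by
      conv_lhs => rw [← mk_toWord (x := w)]
      rw [hW, ← FreeGroup.mul_mk]
    have hred : reduce (W' ++ [r]) = W' ++ [r] := by rw [← hW]; exact reduce_toWord w
    have hchain : List.Chain' R (W' ++ [r]) := chain_of_reduce_eq hred
    have hW'chain : List.Chain' R W' := (List.isChain_append.mp hchain).1
    have hnw : norm w = W'.length + 1 := by
      rw [norm_def, hW]; simp
    obtain ⟨rb, rs⟩ := r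
    cases rb with
    | false =>
      exfalso
      obtain ⟨b, hT⟩ := toWord_U_zpow m
      have hUm : U ^ m = FreeGroup.mk (List.replicate m.natAbs (true, b)) := by
        rw [← hT, mk_toWord]
      set T := List.replicate m.natAbs (true, b) with hTdef
      set W : List (Bool × Bool) := W' ++ [(false, rs)] with hWdef
      have hconj : w * U ^ m * w⁻¹ = FreeGroup.mk (W ++ T ++ FreeGroup.invRev W) := by
        conv_lhs => rw [← mk_toWord (x := w)]
        rw [hW, hUm, FreeGroup.inv_mk, FreeGroup.mul_mk, FreeGroup.mul_mk]
      have hchainInv : List.Chain' R (FreeGroup.invRev W) := by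
        apply chain_of_reduce_eq
        rw [FreeGroup.reduce_invRev, hred]
      have hchainT : List.Chain' R T := chain_repl _ _
      obtain ⟨c, hc⟩ : ∃ c, m.natAbs = c + 1 := ⟨m.natAbs - 1, by omega⟩
      have hTcons : T = (true, b) :: List.replicate c (true, b) := by
        rw [hTdef, hc, List.replicate_succ]
      have hTlast : T.getLast? = some (true, b) := by
        rw [hTdef, hc, List.replicate_succ']
        exact List.getLast?_concat
      have hWlast : W.getLast? = some (false, rs) := by
        rw [hWdef]
        exact List.getLast?_concat
      have hInv : FreeGroup.invRev W = (false, !rs) :: (W'.map (fun g => (g.1, !g.2))).reverse := by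
        simp [FreeGroup.invRev, hWdef]
      have j2 : ∀ x ∈ T.getLast?, ∀ y ∈ (FreeGroup.invRev W).head?, R x y := by
        intro x hx y hy
        obtain rfl : (true, b) = x := by rw [hTlast] at hx; simpa using hx
        obtain rfl : (false, !rs) = y := by rw [hInv] at hy; simpa using hy
        simp [R]
      have j1 : ∀ x ∈ W.getLast?, ∀ y ∈ (T ++ FreeGroup.invRev W).head?, R x y := by
        intro x hx y hy
        obtain rfl : (false, rs) = x := by rw [hWlast] at hx; simpa using hx
        obtain rfl : (true, b) = y := by rw [hTcons] at hy; simpa using hy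
        simp [R]
      have chainAll : List.Chain' R (W ++ (T ++ FreeGroup.invRev W)) :=
        hchain.append (hchainT.append hchainInv j2) j1
      have hnval : norm (w * U ^ m * w⁻¹) = W.length + T.length + W.length := by
        rw [hconj, norm_def, toWord_mk, List.append_assoc, reduce_eq_of_chain chainAll]
        simp [FreeGroup.invRev_length]
        omega
      have hWlen : W.length = W'.length + 1 := by simp [hWdef]
      have hTlen : T.length = m.natAbs := by simp [hTdef]
      omega
    | true =>
      have hs : FreeGroup.mk [((true : Bool), rs)] = U ^ (cond rs 1 (-1) : ℤ) := by
        cases rs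
        · rw [mk_single_false]; simp
        · rw [mk_single_true]; simp
      set e : ℤ := cond rs 1 (-1) with he
      have hwe : w = FreeGroup.mk W' * U ^ e := by rw [hwmk, hs]
      have hkey : w * U ^ m * w⁻¹ = FreeGroup.mk W' * U ^ m * (FreeGroup.mk W')⁻¹ := by
        rw [hwe]; group
      rw [hkey] at hnorm
      have hnormW' : norm (FreeGroup.mk W') = W'.length := by
        rw [norm_def, toWord_mk, reduce_eq_of_chain hW'chain]
      have hle : norm (FreeGroup.mk W') ≤ N := by omega
      obtain ⟨a, ha⟩ := ih (FreeGroup.mk W') m hle hm hnorm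
      exact ⟨a + e, by rw [hwe, ha, ← zpow_add]⟩

theorem base (x w : FreeGroup Bool) (n : ℕ) (m : ℤ) (hn : 0 < n)
    (hne : x.toWord ≠ [])
    (hj : ∀ a ∈ x.toWord.getLast?, ∀ b ∈ x.toWord.head?, R a b)
    (hx : x ^ n = w * U ^ m * w⁻¹) : ∃ k : ℤ, x = w * U ^ k * w⁻¹ := by
  have htw : ∀ t, (x ^ t).toWord = repw x.toWord t := toWord_pow hj
  have hnormt : ∀ t, norm (x ^ t) = t * x.toWord.length := fun t => by
    rw [norm_def, htw, repw_length]
  have hlenpos : x.toWord.length ≠ 0 := fun h => hne (List.length_eq_zero_iff.mp h)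
  have hm : m ≠ 0 := by
    rintro rfl
    have h1 : x ^ n = 1 := by rw [hx]; simp
    have h2 := hnormt n
    rw [h1, FreeGroup.norm_one] at h2
    exact absurd h2.symm (Nat.mul_ne_zero (by omega) hlenpos)
  set Wn := norm w with hWn
  set t₀ := 2 * Wn + 1 with ht₀
  have hxt : x ^ (n * t₀) = w * U ^ (m * t₀) * w⁻¹ := by
    rw [pow_mul, hx, conj_pow, ← zpow_natCast (U ^ m) t₀, ← zpow_mul]
  have hb : norm (x ^ (n * t₀)) ≤ Wn + (m * t₀).natAbs + Wn := by
    rw [hxt]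
    calc norm (w * U ^ (m * t₀) * w⁻¹) ≤ norm (w * U ^ (m * t₀)) + norm w⁻¹ := norm_mul_le _ _
      _ ≤ norm w + norm (U ^ (m * t₀)) + norm w⁻¹ :=
          Nat.add_le_add_right (norm_mul_le _ _) _
      _ = Wn + (m * t₀).natAbs + Wn := by
          rw [norm_inv_eq, norm_U_zpow, hWn]
  rw [hnormt] at hb
  have hkey : n * x.toWord.length ≤ m.natAbs := by
    set A := n * x.toWord.length with hA
    set B := m.natAbs with hB
    have h1 : n * t₀ * x.toWord.length = t₀ * A := by rw [hA]; ring
    have h2 : (m * t₀).natAbs = B * t₀ := by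
      rw [hB, Int.natAbs_mul]; simp
    rw [h1, h2] at hb
    by_contra hAB
    push_neg at hAB
    have h3 : t₀ * (B + 1) ≤ t₀ * A := Nat.mul_le_mul_left _ (by omega)
    have h4 : t₀ * (B + 1) = t₀ * B + t₀ := by ring
    have h5 : t₀ * B = B * t₀ := Nat.mul_comm _ _
    omega
  have hnle : norm (w * U ^ m * w⁻¹) ≤ m.natAbs := by
    rw [← hx, hnormt]; exact hkey
  obtain ⟨a, ha⟩ := conj_norm_le (norm w) w m le_rfl hm hnle
  have hxn : x ^ n = U ^ m := by rw [hx, ha]; group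
  obtain ⟨b, hT⟩ := toWord_U_zpow m
  have hword : repw x.toWord n = List.replicate m.natAbs (true, b) := by
    rw [← htw, hxn, hT]
  have hall : ∀ e ∈ x.toWord, e = (true, b) := by
    intro e he
    have hmem : e ∈ repw x.toWord n := by
      obtain ⟨n', rfl⟩ : ∃ n', n = n' + 1 := ⟨n - 1, by omega⟩
      exact List.mem_append_left _ he
    rw [hword] at hmem
    exact (List.mem_replicate.mp hmem).2
  have hrepl : x.toWord = List.replicate x.toWord.length (true, b) :=
    List.eq_replicate_iff.mpr ⟨rfl, hall⟩
  have hxU : ∃ j : ℤ, x = U ^ j := by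
    cases b with
    | false =>
      refine ⟨-(x.toWord.length : ℤ), toWord_injective ?_⟩
      rw [zpow_neg, zpow_natCast, toWord_inv, toWord_of_pow, hrepl]
      simp [FreeGroup.invRev]
    | true =>
      refine ⟨(x.toWord.length : ℤ), toWord_injective ?_⟩
      rw [zpow_natCast, toWord_of_pow, hrepl]
      simp
  obtain ⟨j, hj'⟩ := hxU
  exact ⟨j, by rw [hj', ha]; group⟩

theorem main : ∀ N : ℕ, ∀ x w : FreeGroup Bool, ∀ n : ℕ, ∀ m : ℤ,
    norm x + norm w ≤ N → 0 < n →
    x ^ n = w * U ^ m * w⁻¹ → ∃ k : ℤ, x = w * U ^ k * w⁻¹ := by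
  intro N
  induction N using Nat.strong_induction_on with
  | _ N ih =>
  intro x w n m hN hn hx
  rcases hLc : x.toWord with _ | ⟨p, L''⟩
  · exact ⟨0, by simp [toWord_eq_nil_iff.mp hLc]⟩
  rcases List.eq_nil_or_concat L'' with rfl | ⟨M, q, hM⟩
  · -- single letter: cyclically reduced
    refine base x w n m hn (by rw [hLc]; simp) ?_ hx
    intro a ha b hb
    rw [hLc] at ha hb
    obtain rfl : p = a := by simpa using ha
    obtain rfl : p = b := by simpa using hb
    simp [R]
  rw [List.concat_eq_append] at hM
  by_cases hcan : q = (p.1, !p.2)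
  · -- ends cancel: peel off the first and last letters
    have hL : x.toWord = [p] ++ M ++ [q] := by rw [hLc, hM]; simp
    have hxmk : x = FreeGroup.mk [p] * FreeGroup.mk M * FreeGroup.mk [q] := by
      conv_lhs => rw [← mk_toWord (x := x)]
      rw [hL, ← FreeGroup.mul_mk, ← FreeGroup.mul_mk]
    have hqinv : FreeGroup.mk [q] = (FreeGroup.mk [p])⁻¹ := by
      rw [hcan, FreeGroup.inv_mk,
        show FreeGroup.invRev [p] = [(p.1, !p.2)] by simp [FreeGroup.invRev]]
    set s := FreeGroup.mk [p] with hs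
    set y := FreeGroup.mk M with hy
    have hxs : x = s * y * s⁻¹ := by rw [hxmk, hqinv]
    have hyn : y ^ n = (s⁻¹ * w) * U ^ m * (s⁻¹ * w)⁻¹ := by
      have h1 : y = s⁻¹ * x * s := by rw [hxs]; group
      have h2 : (s⁻¹ * x * s) ^ n = s⁻¹ * x ^ n * s := by
        have h2' := conj_pow (a := s⁻¹) (b := x) (i := n)
        rwa [inv_inv] at h2'
      rw [h1, h2, hx]
      group
    have hnormy : norm y ≤ M.length := norm_mk_le
    have hnormx : norm x = M.length + 2 := by
      rw [norm_def, hL]; simp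
    have hnsw : norm (s⁻¹ * w) ≤ 1 + norm w := by
      calc norm (s⁻¹ * w) ≤ norm s⁻¹ + norm w := norm_mul_le _ _
        _ ≤ 1 + norm w := by
            have h3 : norm s⁻¹ = norm s := norm_inv_eq
            have h4 : norm s ≤ 1 := norm_mk_le
            omega
    obtain ⟨k, hk⟩ :=
      ih (norm y + norm (s⁻¹ * w)) (by omega) y (s⁻¹ * w) n m le_rfl hn hyn
    exact ⟨k, by rw [hxs, hk]; group⟩
  · -- cyclically reduced
    refine base x w n m hn (by rw [hLc]; simp) ?_ hx
    intro a ha b hb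
    rw [hLc, hM] at ha hb
    obtain rfl : q = a := by
      rw [show p :: (M ++ [q]) = (p :: M) ++ [q] by simp,
        List.getLast?_concat] at ha
      simpa using ha
    obtain rfl : p = b := by simpa using hb
    intro hab
    exact hcan (Prod.ext hab.1 hab.2)

theorem root (z : FreeGroup Bool) (d : ℕ) (m : ℤ) (hd : 0 < d) (h : z ^ d = U ^ m) :
    ∃ j : ℤ, z = U ^ j := by
  obtain ⟨k, hk⟩ := main (FreeGroup.norm z + FreeGroup.norm 1) z 1 d m le_rfl hd (by simpa using h)
  exact ⟨k, by simpa using hk⟩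

theorem isCyclic_zpowers {G : Type*} [Group G] (g : G) : IsCyclic (Subgroup.zpowers g) := by
  refine ⟨⟨⟨g, Subgroup.mem_zpowers g⟩, fun x => ?_⟩⟩
  obtain ⟨k, hk⟩ := Subgroup.mem_zpowers_iff.mp x.2
  refine Subgroup.mem_zpowers_iff.mpr ⟨k, Subtype.ext ?_⟩
  rw [SubgroupClass.coe_zpow]
  exact hk

end Stmt18Aux

/-- In the free group `F` on two generators `u, v` (here `F = FreeGroup Bool`, with
`u = of true`, `v = of false`) with `H = ⟨u⟩`: if a subgroup `K ≤ F` has a finite orbit for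
its left translation action on the coset space `F/H`, then `K` is contained in a conjugate
of `H`, and hence `K` is cyclic. -/
theorem stmt_18 (u : FreeGroup Bool) (hu : u = FreeGroup.of true)
    (H : Subgroup (FreeGroup Bool)) (hH : H = Subgroup.zpowers u)
    (K : Subgroup (FreeGroup Bool))
    (horb : ∃ q : FreeGroup Bool ⧸ H, (MulAction.orbit K q).Finite) :
    (∃ γ : FreeGroup Bool, ∀ k ∈ K, γ⁻¹ * k * γ ∈ H) ∧ IsCyclic K := by
  subst hu hH
  obtain ⟨q, hq⟩ := horb
  obtain ⟨γ, rfl⟩ := QuotientGroup.mk_surjective q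
  have key : ∀ k ∈ K, ∃ j : ℤ, γ⁻¹ * k * γ = Stmt18Aux.U ^ j := by
    intro k hk
    set κ : K := ⟨k, hk⟩ with hκ
    have hmap : Set.MapsTo
        (fun t : ℕ => (κ ^ t) • (QuotientGroup.mk γ : FreeGroup Bool ⧸ Subgroup.zpowers (FreeGroup.of true)))
        Set.univ (MulAction.orbit K (QuotientGroup.mk γ)) := by
      intro t _
      exact ⟨κ ^ t, rfl⟩
    obtain ⟨a, -, b, -, hab, heq⟩ := Set.infinite_univ.exists_ne_map_eq_of_mapsTo hmap hq
    wlog hlt : a < b generalizing a b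
    · exact this b a hab.symm heq.symm (by omega)
    have hstep : (κ ^ (b - a)) • (QuotientGroup.mk γ :
        FreeGroup Bool ⧸ Subgroup.zpowers (FreeGroup.of true)) = QuotientGroup.mk γ := by
      have h1 : κ ^ b = κ ^ a * κ ^ (b - a) := by
        rw [← pow_add]
        congr 1
        omega
      rw [h1, mul_smul] at heq
      exact (MulAction.injective (κ ^ a) heq).symm
    have hsm : (κ ^ (b - a)) • (QuotientGroup.mk γ :
        FreeGroup Bool ⧸ Subgroup.zpowers (FreeGroup.of true)) =
        QuotientGroup.mk (k ^ (b - a) * γ) := by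
      have hcoe : ((κ ^ (b - a) : K) : FreeGroup Bool) = k ^ (b - a) := by
        rw [hκ]; simp
      show ((κ ^ (b - a) : K) : FreeGroup Bool) • (QuotientGroup.mk γ :
          FreeGroup Bool ⧸ Subgroup.zpowers (FreeGroup.of true)) = _
      rw [hcoe]
      rfl
    rw [hsm] at hstep
    have hmem : (k ^ (b - a) * γ)⁻¹ * γ ∈ Subgroup.zpowers (FreeGroup.of true) :=
      QuotientGroup.eq.mp hstep
    have hmem2 : γ⁻¹ * k ^ (b - a) * γ ∈ Subgroup.zpowers (FreeGroup.of true) := by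
      have h2 : γ⁻¹ * k ^ (b - a) * γ = ((k ^ (b - a) * γ)⁻¹ * γ)⁻¹ := by group
      rw [h2]
      exact Subgroup.inv_mem _ hmem
    obtain ⟨mz, hmz⟩ := Subgroup.mem_zpowers_iff.mp hmem2
    have hconj : (γ⁻¹ * k * γ) ^ (b - a) = Stmt18Aux.U ^ mz := by
      have h3 : (γ⁻¹ * k * γ) ^ (b - a) = γ⁻¹ * k ^ (b - a) * γ := by
        have h3' := conj_pow (a := γ⁻¹) (b := k) (i := b - a)
        rwa [inv_inv] at h3'
      rw [h3, ← hmz]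
    exact Stmt18Aux.root _ (b - a) mz (by omega) hconj
  constructor
  · refine ⟨γ, fun k hk => ?_⟩
    obtain ⟨j, hj⟩ := key k hk
    exact Subgroup.mem_zpowers_iff.mpr ⟨j, hj.symm⟩
  · set Z := Subgroup.zpowers (γ * FreeGroup.of true * γ⁻¹) with hZ
    have hKZ : K ≤ Z := by
      intro k hk
      obtain ⟨j, hj⟩ := key k hk
      refine Subgroup.mem_zpowers_iff.mpr ⟨j, ?_⟩
      have h4 : k = γ * Stmt18Aux.U ^ j * γ⁻¹ := by
        rw [← hj]; group
      rw [h4, conj_zpow]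
    haveI : IsCyclic Z := Stmt18Aux.isCyclic_zpowers _
    have hinj := Subgroup.inclusion_injective hKZ
    exact isCyclic_of_surjective (MonoidHom.ofInjective hinj).symm (MulEquiv.surjective _)
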